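/- Let L < 0 < U and let s̄ = U/(U-L), t̄ = -L·U/(U-L). Suppose real numbers s, t satisfy J·δ ≤ s·J + t for all J ∈ [L, U] and all δ ∈ [0, 1], and (s, t) ≠ (s̄, t̄). Then for every J with L < J < U, s·J + t > s̄·J + t̄. -/

import Mathlib

theorem upper_relaxation_optimal (L U : ℝ) (hL : L < 0) (hU : 0 < U)
    (s t : ℝ)
    (hvalid : ∀ J δ : ℝ, L ≤ J → J ≤ U → 0 ≤ δ → δ ≤ 1 → J * δ ≤ s * J + t)
    (hne : (s, t) ≠ (U / (U - L), -(L * U) / (U - L))) :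
    ∀ J : ℝ, L < J → J < U →
      s * J + t > (U / (U - L)) * J + (-(L * U) / (U - L)) := by
  intro J hJL hJU
  have hUL : (0:ℝ) < U - L := by linarith
  have hA : 0 ≤ s * L + t := by
    have := hvalid L 0 le_rfl (by linarith) le_rfl zero_le_one
    simpa using this
  have hB : U ≤ s * U + t := by
    have := hvalid U 1 (by linarith) le_rfl zero_le_one le_rfl
    simpa using this
  have hnb : 0 < s * L + t ∨ U < s * U + t := by
    by_contra h
    push_neg at h
    obtain ⟨h1, h2⟩ := h
    have e1 : s * L + t = 0 := le_antisymm h1 hA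
    have e2 : s * U + t = U := le_antisymm h2 hB
    have hs : s = U / (U - L) := by
      rw [eq_div_iff hUL.ne']; linear_combination e2 - e1
    have ht : t = -(L * U) / (U - L) := by
      rw [eq_div_iff hUL.ne']; linear_combination U * e1 - L * e2
    exact hne (Prod.ext hs ht)
  have key : U * J + -(L * U) < (s * J + t) * (U - L) := by
    rcases hnb with hpos | hpos
    · nlinarith [mul_pos hpos (show (0:ℝ) < U - J by linarith),
        mul_nonneg (show (0:ℝ) ≤ s * U + t - U by linarith) (show (0:ℝ) ≤ J - L by linarith)]
    · nlinarith [mul_nonneg hA (show (0:ℝ) ≤ U - J by linarith),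
        mul_pos (show (0:ℝ) < s * U + t - U by linarith) (show (0:ℝ) < J - L by linarith)]
  rw [gt_iff_lt, div_mul_eq_mul_div, ← add_div, div_lt_iff₀ hUL]
  linarith [key]
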